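/- Let w : ℂ → ℂ be a solution of the Airy equation w'' = z·w that is real on the real axis (i.e., w(x̄) = conj(w(x)) for all x). Suppose α = r·e^{iφ} with r > 0, 0 < φ < π, and w(α) = 0 and w(ᾱ) = 0. Then w(0)·w'(0)·sin φ = −r²·sin(3φ)·∫₀¹ t·|w(αt)|² dt. -/

import Mathlib

open Complex Real

theorem lommel_integral_zeros (w : ℂ → ℂ)
    (hw : Differentiable ℂ w) (hw' : Differentiable ℂ (deriv w))
    (hairy : ∀ z : ℂ, deriv (deriv w) z = z * w z)
    (hreal : ∀ x : ℂ, w (starRingEnd ℂ x) = starRingEnd ℂ (w x))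
    (r φ : ℝ) (hr : 0 < r) (hφ : 0 < φ ∧ φ < Real.pi)
    (α : ℂ) (hα : α = r * Complex.exp (φ * Complex.I))
    (hz : w α = 0) (hz' : w (starRingEnd ℂ α) = 0) :
    w 0 * deriv w 0 * (Real.sin φ : ℂ)
      = -((r ^ 2 * Real.sin (3 * φ) * ∫ t in (0:ℝ)..1, t * ‖w (α * t)‖ ^ 2 : ℝ) : ℂ) := by
  set β : ℂ := starRingEnd ℂ α with hβ
  -- derivative of t ↦ w (a*t)
  have key : ∀ (a : ℂ) (t : ℝ), HasDerivAt (fun s : ℝ => w (a * s)) (a * deriv w (a * t)) t := by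
    intro a t
    have h1 : HasDerivAt (fun s : ℝ => a * (s : ℂ)) a t := by
      simpa using (Complex.ofRealCLM.hasDerivAt (x := t)).const_mul a
    have h2 : HasDerivAt w (deriv w (a * t)) (a * (t : ℂ)) := (hw (a * t)).hasDerivAt
    exact h2.scomp t h1
  have key' : ∀ (a : ℂ) (t : ℝ),
      HasDerivAt (fun s : ℝ => deriv w (a * s)) (a * ((a * t) * w (a * t))) t := by
    intro a t
    have h1 : HasDerivAt (fun s : ℝ => a * (s : ℂ)) a t := by
      simpa using (Complex.ofRealCLM.hasDerivAt (x := t)).const_mul a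
    have h2 : HasDerivAt (deriv w) (deriv (deriv w) (a * t)) (a * (t : ℂ)) :=
      (hw' (a * t)).hasDerivAt
    rw [hairy] at h2
    exact h2.scomp t h1
  set F : ℝ → ℂ := fun t => α * deriv w (α * t) * w (β * t) - β * deriv w (β * t) * w (α * t)
    with hF
  have hFd : ∀ t : ℝ, HasDerivAt F ((α ^ 3 - β ^ 3) * t * (w (α * t) * w (β * t))) t := by
    intro t
    have hA := (((key' α t).const_mul α).mul (key β t))
    have hB := (((key' β t).const_mul β).mul (key α t))
    convert hA.sub hB using 1
    · rfl
    · rfl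
    ring
  have hcont : Continuous fun t : ℝ => (α ^ 3 - β ^ 3) * (t : ℂ) * (w (α * t) * w (β * t)) := by
    have hc : Continuous fun t : ℝ => (t : ℂ) := Complex.continuous_ofReal
    exact (continuous_const.mul hc).mul
      ((hw.continuous.comp (continuous_const.mul hc)).mul
        (hw.continuous.comp (continuous_const.mul hc)))
  have hint := intervalIntegral.integral_eq_sub_of_hasDerivAt
    (f := F) (f' := fun t : ℝ => (α ^ 3 - β ^ 3) * (t : ℂ) * (w (α * t) * w (β * t)))
    (a := 0) (b := 1) (fun t _ => hFd t) (hcont.intervalIntegrable 0 1)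
  -- conjugation: w (β t) = conj (w (α t))
  have hconj : ∀ t : ℝ, w (β * t) = starRingEnd ℂ (w (α * t)) := by
    intro t
    rw [hβ, show starRingEnd ℂ α * (t : ℂ) = starRingEnd ℂ (α * t) by
      simp [map_mul, Complex.conj_ofReal], hreal]
  have hnorm : ∀ t : ℝ, w (α * t) * w (β * t) = ((‖w (α * t)‖ ^ 2 : ℝ) : ℂ) := by
    intro t
    rw [hconj t, Complex.mul_conj]
    norm_cast
    rw [Complex.normSq_eq_norm_sq]
  -- compute the integral as a real integral
  have hintval : (∫ t in (0:ℝ)..1, (α ^ 3 - β ^ 3) * (t : ℂ) * (w (α * t) * w (β * t)))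
      = (α ^ 3 - β ^ 3) * ((∫ t in (0:ℝ)..1, t * ‖w (α * t)‖ ^ 2 : ℝ) : ℂ) := by
    rw [← intervalIntegral.integral_ofReal, ← intervalIntegral.integral_const_mul]
    apply intervalIntegral.integral_congr
    intro t _
    simp only [hnorm]
    push_cast
    ring
  -- endpoint values
  have hF1 : F 1 = 0 := by
    simp only [hF, Complex.ofReal_one, mul_one]
    rw [hz, hz']
    ring
  have hF0 : F 0 = (α - β) * deriv w 0 * w 0 := by
    simp only [hF, Complex.ofReal_zero, mul_zero]
    ring
  rw [hintval, hF1, hF0] at hint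
  -- exponential form of β and trig differences
  have hb : β = (r : ℂ) * Complex.exp ((-φ : ℝ) * Complex.I) := by
    rw [hβ, hα, map_mul, ← Complex.exp_conj, Complex.conj_ofReal,
      show starRingEnd ℂ ((φ:ℂ) * Complex.I) = ((-φ : ℝ):ℂ) * Complex.I by
        simp [Complex.conj_ofReal]]
  have diff : ∀ θ : ℝ, Complex.exp ((θ : ℝ) * Complex.I) - Complex.exp ((-θ : ℝ) * Complex.I)
      = 2 * (Real.sin θ : ℂ) * Complex.I := by
    intro θ
    rw [Complex.exp_mul_I, Complex.exp_mul_I, Complex.ofReal_neg, Complex.cos_neg,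
      Complex.sin_neg, ← Complex.ofReal_sin]
    ring
  have hsub : α - β = 2 * (Real.sin φ : ℝ) * r * Complex.I := by
    rw [hα, hb]
    have := diff φ
    push_cast at this ⊢
    linear_combination (r : ℂ) * this
  have cube : ∀ θ : ℝ, Complex.exp ((θ : ℝ) * Complex.I) ^ 3
      = Complex.exp ((3 * θ : ℝ) * Complex.I) := by
    intro θ
    rw [show ((3 * θ : ℝ) : ℂ) * Complex.I = (3 : ℕ) * ((θ : ℝ) * Complex.I) by push_cast; ring,
      Complex.exp_nat_mul]
  have hsub3 : α ^ 3 - β ^ 3 = 2 * (Real.sin (3 * φ) : ℝ) * r ^ 3 * Complex.I := by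
    rw [hα, hb, mul_pow, mul_pow, cube φ, cube (-φ)]
    have := diff (3 * φ)
    rw [show (3 : ℝ) * -φ = -(3 * φ) by ring]
    push_cast at this ⊢
    linear_combination (r : ℂ) ^ 3 * this
  rw [hsub, hsub3] at hint
  have h2rI : (2 * (r : ℂ) * Complex.I) ≠ 0 := by
    simp [Complex.I_ne_zero, Complex.ofReal_ne_zero, ne_of_gt hr]
  refine mul_left_cancel₀ h2rI ?_
  push_cast at hint ⊢
  linear_combination hint
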